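/- For every n ≥ 1, the number of points of Σ fixed by σ_τ^n equals |S|^n. -/

import Mathlib

/-- The zip shift space condition: `S`-valued at indices `≥ 0`, `Z`-valued at indices `< 0`. -/
def IsZipSeq (S Z : Type) (x : ℤ → S ⊕ Z) : Prop :=
  ∀ i : ℤ, (0 ≤ i → (x i).isLeft) ∧ (i < 0 → (x i).isRight)

/-- The zip shift space `Σ` over alphabets `S` and `Z`. -/
def ZipSeq (S Z : Type) := {x : ℤ → S ⊕ Z // IsZipSeq S Z x}

/-- `M(x,y) = min { |i| : x_i ≠ y_i }`. -/
noncomputable def zipM {S Z : Type} (x y : ZipSeq S Z) : ℕ :=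
  sInf {n : ℕ | ∃ i : ℤ, i.natAbs = n ∧ x.1 i ≠ y.1 i}

open Classical in
/-- The metric `d(x,y) = 2^{-M(x,y)}` for `x ≠ y`, and `d(x,x) = 0`. -/
noncomputable def zipDist {S Z : Type} (x y : ZipSeq S Z) : ℝ :=
  if x = y then 0 else (1 / 2 : ℝ) ^ zipM x y

/-- Auxiliary: apply `τ` to the left (`S`) component, landing in `Z`. -/
def mapTau {S Z : Type} (τ : S → Z) : S ⊕ Z → S ⊕ Z :=
  Sum.elim (fun s => Sum.inr (τ s)) Sum.inr

/-- The full zip shift map `σ_τ`: shift left by one, applying `τ` to the symbol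
moving from index `0` to index `-1`. -/
def zipShift {S Z : Type} (τ : S → Z) (x : ZipSeq S Z) : ZipSeq S Z :=
  ⟨fun i => if i = -1 then mapTau τ (x.1 0) else x.1 (i + 1), by
    intro i
    constructor
    · intro hi
      have hne : i ≠ -1 := by omega
      simpa [hne] using (x.2 (i + 1)).1 (by omega)
    · intro hi
      by_cases h : i = -1
      · rcases hx0 : x.1 0 with s | z <;> simp [h, mapTau, hx0]
      · simpa [h] using (x.2 (i + 1)).2 (by omega)⟩

section Aux
variable {S Z : Type} (τ : S → Z)

lemma mapTau_mapTau (v : S ⊕ Z) : mapTau τ (mapTau τ v) = mapTau τ v := by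
  cases v <;> simp [mapTau]

lemma inl_getLeft_eq {v : S ⊕ Z} (h : v.isLeft) : Sum.inl (v.getLeft h) = v := by
  cases v <;> simp_all

lemma inr_tau_getLeft {v : S ⊕ Z} (h : v.isLeft) :
    Sum.inr (τ (v.getLeft h)) = mapTau τ v := by
  cases v with
  | inl a => simp [mapTau]
  | inr z => simp at h

lemma mapTau_of_isRight {v : S ⊕ Z} (h : v.isRight) : mapTau τ v = v := by
  cases v <;> simp_all [mapTau]

lemma zipShift_iterate_apply (n : ℕ) (x : ZipSeq S Z) (i : ℤ) :
    ((zipShift τ)^[n] x).1 i =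
      if 0 ≤ i then x.1 (i + n) else mapTau τ (x.1 (i + n)) := by
  induction n generalizing i with
  | zero =>
    by_cases h : 0 ≤ i
    · simp [h]
    · simp [h, mapTau_of_isRight τ ((x.2 i).2 (by omega))]
  | succ n ih =>
    rw [Function.iterate_succ_apply']
    show (if i = -1 then mapTau τ (((zipShift τ)^[n] x).1 0)
        else ((zipShift τ)^[n] x).1 (i + 1)) = _
    by_cases h1 : i = -1
    · have h2 : ¬ (0 ≤ i) := by omega
      rw [if_pos h1, ih 0, if_pos le_rfl, if_neg h2,
        show (0:ℤ) + (n:ℤ) = i + ((n+1 : ℕ):ℤ) by push_cast; omega]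
    · rw [if_neg h1, ih (i + 1)]
      by_cases h2 : 0 ≤ i
      · rw [if_pos (by omega : (0:ℤ) ≤ i + 1), if_pos h2,
          show i + 1 + (n:ℤ) = i + ((n+1 : ℕ):ℤ) by push_cast; omega]
      · rw [if_neg (by omega : ¬ (0:ℤ) ≤ i + 1), if_neg h2,
          show i + 1 + (n:ℤ) = i + ((n+1 : ℕ):ℤ) by push_cast; omega]

variable {n : ℕ} {p : ZipSeq S Z}

lemma fix_step (hp : (zipShift τ)^[n] p = p) (i : ℤ) :
    p.1 i = if 0 ≤ i then p.1 (i + n) else mapTau τ (p.1 (i + n)) := by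
  have h := congrArg (fun q : ZipSeq S Z => q.1 i) hp
  rw [zipShift_iterate_apply τ n p i] at h
  exact h.symm

lemma fix_add_mul (hp : (zipShift τ)^[n] p = p) (k : ℕ) : ∀ i : ℤ, 0 ≤ i → p.1 i = p.1 (i + k * n) := by
  induction k with
  | zero => simp
  | succ k ih =>
    intro i hi
    have h1 := fix_step τ hp i
    rw [if_pos hi] at h1
    rw [h1, ih (i + n) (by omega)]
    push_cast; ring_nf

lemma fix_pos_mod (hp : (zipShift τ)^[n] p = p) (hn : 0 < n) (i : ℤ) (hi : 0 ≤ i) : p.1 i = p.1 (i % n) := by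
  have hn' : (0:ℤ) < n := by exact_mod_cast hn
  have h1 : (0:ℤ) ≤ i / n := Int.ediv_nonneg hi (le_of_lt hn')
  have h2 := fix_add_mul τ hp (i / n).toNat (i % n) (Int.emod_nonneg i (by omega))
  have h3 : i % n + ((i / n).toNat : ℤ) * n = i := by
    rw [Int.toNat_of_nonneg h1]
    have := Int.emod_add_mul_ediv i n
    linarith [Int.emod_add_mul_ediv i n, mul_comm (i / n) (n:ℤ)]
  rw [h3] at h2
  exact h2.symm

lemma fix_neg_mod (hp : (zipShift τ)^[n] p = p) (hn : 0 < n) :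
    ∀ m : ℕ, ∀ i : ℤ, i.natAbs ≤ m → i < 0 → p.1 i = mapTau τ (p.1 (i % n)) := by
  have hn' : (0:ℤ) < n := by exact_mod_cast hn
  intro m
  induction m with
  | zero => intro i h1 h2; omega
  | succ m ih =>
    intro i h1 h2
    have h3 := fix_step τ hp i
    rw [if_neg (by omega)] at h3
    have hmod : (i + n) % n = i % n := by
      rw [show i + (n:ℤ) = i + n * 1 by ring, Int.add_mul_emod_self_left]
    by_cases h4 : 0 ≤ i + n
    · rw [h3, fix_pos_mod τ hp hn (i + n) h4, hmod]
    · rw [h3, ih (i + n) (by omega) (by omega), mapTau_mapTau, hmod]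

end Aux

/-- for every `n ≥ 1`, the number of points fixed by `σ_τ^n`
equals `|S|^n`. -/
theorem zipShift_card_periodic (S Z : Type) [Fintype S] [Fintype Z]
    (τ : S → Z) (hτ : Function.Surjective τ) (n : ℕ) (hn : 1 ≤ n) :
    Nat.card {p : ZipSeq S Z // (zipShift τ)^[n] p = p} = Fintype.card S ^ n := by
  have hn' : (0:ℤ) < n := by exact_mod_cast hn
  have hidx : ∀ i : ℤ, (i % n).toNat < n := by
    intro i
    have := Int.emod_nonneg i (by omega : (n:ℤ) ≠ 0)
    have := Int.emod_lt_of_pos i hn'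
    omega
  -- the sequence built from a word s : Fin n → S
  let seq : (Fin n → S) → ℤ → S ⊕ Z := fun s i =>
    if 0 ≤ i then Sum.inl (s ⟨(i % n).toNat, hidx i⟩)
    else Sum.inr (τ (s ⟨(i % n).toNat, hidx i⟩))
  have hseq : ∀ s, IsZipSeq S Z (seq s) := by
    intro s i
    constructor
    · intro hi; simp [seq, hi]
    · intro hi; simp [seq, hi, not_le.mpr hi]
  have hmodn : ∀ i : ℤ, (i + n) % n = i % n := fun i => by
    rw [show i + (n:ℤ) = i + n * 1 by ring, Int.add_mul_emod_self_left]
  have hfix : ∀ s, (zipShift τ)^[n] ⟨seq s, hseq s⟩ = ⟨seq s, hseq s⟩ := by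
    intro s
    apply Subtype.ext
    funext i
    rw [zipShift_iterate_apply τ n ⟨seq s, hseq s⟩ i]
    by_cases hi : 0 ≤ i
    · rw [if_pos hi]
      show seq s (i + n) = seq s i
      simp only [seq, if_pos hi, if_pos (by omega : (0:ℤ) ≤ i + n)]
      congr 2
      exact Fin.ext (by simp [hmodn i])
    · rw [if_neg hi]
      show mapTau τ (seq s (i + n)) = seq s i
      by_cases h2 : 0 ≤ i + n
      · simp only [seq, if_pos h2, if_neg hi, mapTau, Sum.elim_inl]
        congr 3
        exact Fin.ext (by simp [hmodn i])
      · simp only [seq, if_neg h2, if_neg hi, mapTau, Sum.elim_inr]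
        congr 3
        exact Fin.ext (by simp [hmodn i])
  let e : {p : ZipSeq S Z // (zipShift τ)^[n] p = p} ≃ (Fin n → S) :=
    { toFun := fun p k =>
        (p.1.1 (k : ℤ)).getLeft ((p.1.2 (k : ℤ)).1 (by positivity))
      invFun := fun s => ⟨⟨seq s, hseq s⟩, hfix s⟩
      left_inv := by
        intro p
        apply Subtype.ext
        apply Subtype.ext
        funext i
        show seq (fun k => (p.1.1 (k : ℤ)).getLeft ((p.1.2 (k : ℤ)).1 (by positivity))) i
          = p.1.1 i
        have hmm : (((i % n).toNat : ℤ)) = i % n := by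
          have := Int.emod_nonneg i (by omega : (n:ℤ) ≠ 0)
          omega
        by_cases hi : 0 ≤ i
        · simp only [seq, if_pos hi]
          rw [fix_pos_mod τ p.2 (by omega) i hi, inl_getLeft_eq]
          exact congrArg p.1.1 hmm
        · simp only [seq, if_neg hi]
          rw [fix_neg_mod τ p.2 (by omega) i.natAbs i le_rfl (by omega),
            inr_tau_getLeft τ]
          exact congrArg (fun j => mapTau τ (p.1.1 j)) hmm
      right_inv := by
        intro s
        funext k
        show (seq s (k : ℤ)).getLeft _ = s k
        have h1 : ((k : ℤ)) % n = (k : ℤ) := Int.emod_eq_of_lt (by positivity) (by exact_mod_cast k.2)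
        simp only [seq, if_pos (by positivity : (0:ℤ) ≤ (k:ℤ))]
        rw [Sum.getLeft_inl]
        congr 1
        exact Fin.ext (by simp [h1])
      }
  rw [Nat.card_congr e, Nat.card_eq_fintype_card]
  simp
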